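/- arXiv:2001.03983 — 2 statements merged into one kernel-verified Lean document; each statement's English description precedes it below -/
import Mathlib

section
/- For every R ≥ 0: D̃(e^{−R},Q_Y) = inf over all channels W (families of probability mass functions W(·|x) on 𝒴 indexed by x ∈ 𝒳) satisfying P_X(x) W(y|x) ≤ e^R P_X(x) Q_Y(y) for all x ∈ 𝒳 and y ∈ 𝒴, of Σ_{x∈𝒳} Σ_{y∈𝒴} P_X(x) W(y|x) d(x,y). (The constraint states D_∞(P_X × W ‖ P_X × Q_Y) ≤ R.) -/
open MeasureTheory

/-- The pairwise correct probability `p_c(x,y,u)` with respect to the pmf `Q` on `Y`: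
`p_c(x,y,u) = Q{y' : d(x,y') < d(x,y)} + u * Q{y' : d(x,y') = d(x,y)}`. -/
noncomputable def pc {X Y : Type*} [Fintype Y] (Q : Y → ℝ) (d : X → Y → ℝ)
    (x : X) (y : Y) (u : ℝ) : ℝ :=
  (∑ y' : Y, if d x y' < d x y then Q y' else 0)
    + u * (∑ y' : Y, if d x y' = d x y then Q y' else 0)

/-- The functional `D̃(w,Q) = w⁻¹ ⬝ E_{P ⊗ Q ⊗ Unif[0,1]}[ d(X,Y) ⬝ 1{p_c(X,Y,U) ≤ w} ]`. -/
noncomputable def Dtilde {X Y : Type*} [Fintype X] [Fintype Y]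
    (P : X → ℝ) (Q : Y → ℝ) (d : X → Y → ℝ) (w : ℝ) : ℝ :=
  w⁻¹ * ∑ x : X, ∑ y : Y, P x * Q y * d x y *
    (∫ u in Set.Icc (0:ℝ) 1, if pc Q d x y u ≤ w then (1:ℝ) else 0)


section Aux
open Finset

lemma meas_set (a b w : ℝ) : MeasurableSet {u : ℝ | a + u * b ≤ w} :=
  measurableSet_le (measurable_const.add (measurable_id.mul_const b)) measurable_const

lemma ind_eq (a b w : ℝ) : (fun u : ℝ => if a + u * b ≤ w then (1:ℝ) else 0)
    = Set.indicator {u : ℝ | a + u * b ≤ w} (fun _ => (1:ℝ)) := by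
  funext u
  by_cases h : a + u * b ≤ w
  · simp [h, Set.indicator_of_mem, Set.mem_setOf_eq]
  · simp [h, Set.indicator_of_notMem, Set.mem_setOf_eq]

lemma ind_integrable (a b w : ℝ) :
    IntegrableOn (fun u : ℝ => if a + u * b ≤ w then (1:ℝ) else 0) (Set.Icc 0 1) := by
  rw [ind_eq]
  exact (integrableOn_const (by simp)).indicator (meas_set a b w)

lemma ind_nonneg (a b w : ℝ) :
    0 ≤ ∫ u in Set.Icc (0:ℝ) 1, if a + u * b ≤ w then (1:ℝ) else 0 :=
  integral_nonneg (fun u => by split_ifs <;> norm_num)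

lemma ind_le_one (a b w : ℝ) :
    (∫ u in Set.Icc (0:ℝ) 1, if a + u * b ≤ w then (1:ℝ) else 0) ≤ 1 := by
  have h1 : (∫ _u in Set.Icc (0:ℝ) 1, (1:ℝ)) = 1 := by
    simp [Real.volume_Icc]
  calc (∫ u in Set.Icc (0:ℝ) 1, if a + u * b ≤ w then (1:ℝ) else 0)
      ≤ ∫ _u in Set.Icc (0:ℝ) 1, (1:ℝ) := by
        apply integral_mono_of_nonneg
          (Filter.Eventually.of_forall fun u => by dsimp; split_ifs <;> norm_num)
          (integrableOn_const (μ := volume) (s := Set.Icc (0:ℝ) 1) (C := (1:ℝ)) (by simp))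
          (Filter.Eventually.of_forall fun u => by split_ifs <;> norm_num)
    _ = 1 := h1

lemma ind_eq_one (a b w : ℝ) (hb : 0 ≤ b) (h : a + b ≤ w) :
    (∫ u in Set.Icc (0:ℝ) 1, if a + u * b ≤ w then (1:ℝ) else 0) = 1 := by
  have heq : ∀ u ∈ Set.Icc (0:ℝ) 1, (if a + u * b ≤ w then (1:ℝ) else 0) = 1 := by
    intro u hu
    rw [if_pos]
    nlinarith [hu.1, hu.2]
  rw [setIntegral_congr_fun measurableSet_Icc heq]
  simp [Real.volume_Icc]

lemma ind_eq_zero (a b w : ℝ) (hb : 0 ≤ b) (h : w < a) :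
    (∫ u in Set.Icc (0:ℝ) 1, if a + u * b ≤ w then (1:ℝ) else 0) = 0 := by
  have heq : ∀ u ∈ Set.Icc (0:ℝ) 1, (if a + u * b ≤ w then (1:ℝ) else 0) = 0 := by
    intro u hu
    rw [if_neg]
    push_neg
    nlinarith [hu.1]
  rw [setIntegral_congr_fun measurableSet_Icc heq]
  simp

lemma ind_eq_formula (a b w : ℝ) (hb : 0 < b) :
    (∫ u in Set.Icc (0:ℝ) 1, if a + u * b ≤ w then (1:ℝ) else 0)
      = max 0 (min 1 ((w - a)/b)) := by
  have hset : {u : ℝ | a + u * b ≤ w} = Set.Iic ((w - a)/b) := by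
    ext u
    simp only [Set.mem_setOf_eq, Set.mem_Iic, le_div_iff₀ hb]
    constructor <;> intro <;> linarith
  rw [ind_eq, hset, setIntegral_indicator measurableSet_Iic, show Set.Icc (0:ℝ) 1 ∩ Set.Iic ((w-a)/b) = Set.Icc 0 (min 1 ((w-a)/b)) by
      rw [← Set.Ici_inter_Iic, Set.inter_assoc, Set.Iic_inter_Iic, Set.Ici_inter_Iic],
    setIntegral_const, Real.volume_real_Icc, smul_eq_mul, mul_one, sub_zero, max_comm]

lemma key_alg (a b w : ℝ) (hb : 0 < b) :
    b * max 0 (min 1 ((w - a)/b)) = min (a + b) w - min a w := by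
  rcases le_total w a with h | h
  · rw [min_eq_right h, min_eq_right (by linarith : w ≤ a + b),
      min_eq_right (by nlinarith [div_nonpos_of_nonpos_of_nonneg (by linarith : w - a ≤ 0) hb.le] : (w - a)/b ≤ 1),
      max_eq_left (div_nonpos_of_nonpos_of_nonneg (by linarith : w - a ≤ 0) hb.le)]
    ring
  · rw [min_eq_left h]
    rcases le_total w (a + b) with h2 | h2
    · rw [min_eq_right h2,
        min_eq_right ((div_le_one hb).mpr (by linarith)),
        max_eq_right (div_nonneg (by linarith) hb.le)]
      field_simp
    · rw [min_eq_left h2, min_eq_left ((le_div_iff₀ hb).mpr (by linarith))]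
      simp

noncomputable def Av {Y : Type*} [Fintype Y] (Q g : Y → ℝ) (v : ℝ) : ℝ :=
  ∑ y' : Y, if g y' < v then Q y' else 0

noncomputable def Bv {Y : Type*} [Fintype Y] (Q g : Y → ℝ) (v : ℝ) : ℝ :=
  ∑ y' : Y, if g y' = v then Q y' else 0

noncomputable def Hv {Y : Type*} [Fintype Y] (Q g : Y → ℝ) (v : ℝ) : ℝ :=
  ∑ y' : Y, if g y' ≤ v then Q y' else 0

noncomputable def av {Y : Type*} [Fintype Y] (Q g : Y → ℝ) (w v : ℝ) : ℝ :=
  ∫ u in Set.Icc (0:ℝ) 1, if Av Q g v + u * Bv Q g v ≤ w then (1:ℝ) else 0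

variable {Y : Type*} [Fintype Y]

lemma Hv_eq (Q g : Y → ℝ) (v : ℝ) : Hv Q g v = Av Q g v + Bv Q g v := by
  rw [Av, Bv, Hv, ← Finset.sum_add_distrib]
  apply Finset.sum_congr rfl
  intro y' _
  rcases lt_trichotomy (g y') v with h | h | h
  · simp [h, le_of_lt h, ne_of_lt h]
  · simp [h]
  · simp [not_le.mpr h, not_lt.mpr h.le, h.ne']

lemma Bv_nonneg (Q g : Y → ℝ) (hQ0 : ∀ y, 0 ≤ Q y) (v : ℝ) : 0 ≤ Bv Q g v :=
  Finset.sum_nonneg fun y' _ => by split_ifs; exacts [hQ0 y', le_refl 0]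

lemma step_eq (Q g : Y → ℝ) (hQ0 : ∀ y, 0 ≤ Q y) (w v : ℝ) :
    Bv Q g v * av Q g w v = min (Hv Q g v) w - min (Av Q g v) w := by
  rcases eq_or_lt_of_le (Bv_nonneg Q g hQ0 v) with h | h
  · rw [← h, Hv_eq, ← h, add_zero, zero_mul, sub_self]
  · rw [av, ind_eq_formula _ _ _ h, key_alg _ _ _ h, Hv_eq]

lemma telescope [Nonempty Y] (Q g : Y → ℝ) (hQ1 : ∑ y : Y, Q y = 1)
    (w : ℝ) (hw : 0 ≤ w) (hw1 : w ≤ 1) :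
    ∑ v ∈ Finset.image g Finset.univ, (min (Hv Q g v) w - min (Av Q g v) w) = w := by
  classical
  set s := Finset.image g (Finset.univ : Finset Y) with hs
  have hmem : ∀ y : Y, g y ∈ s := fun y => Finset.mem_image_of_mem g (Finset.mem_univ y)
  set k := s.card with hk
  let e := s.orderIsoOfFin hk.symm
  let idx : Y → Fin k := fun y => e.symm ⟨g y, hmem y⟩
  have hidx : ∀ y, (e (idx y) : ℝ) = g y := fun y => by simp [idx]
  set F : ℕ → ℝ := fun i => min (∑ y' : Y, if (idx y' : ℕ) < i then Q y' else 0) w with hF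
  have hF0 : F 0 = 0 := by simp [hF, min_eq_left hw]
  have hFk : F k = w := by
    have h1 : ∀ y' : Y, ((idx y' : ℕ) < k) := fun y' => (idx y').isLt
    simp [hF, h1, hQ1, min_eq_right hw1]
  have hstep : ∀ i : Fin k, min (Hv Q g (e i)) w - min (Av Q g (e i)) w
      = F ((i : ℕ) + 1) - F (i : ℕ) := by
    intro i
    have h1 : Hv Q g (e i) = ∑ y' : Y, if (idx y' : ℕ) < (i : ℕ) + 1 then Q y' else 0 := by
      apply Finset.sum_congr rfl
      intro y' _
      congr 1
      rw [eq_iff_iff, ← hidx y', Nat.lt_succ_iff]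
      exact ⟨fun h => e.le_iff_le.mp (Subtype.coe_le_coe.mp h),
        fun h => Subtype.coe_le_coe.mpr (e.le_iff_le.mpr h)⟩
    have h2 : Av Q g (e i) = ∑ y' : Y, if (idx y' : ℕ) < (i : ℕ) then Q y' else 0 := by
      apply Finset.sum_congr rfl
      intro y' _
      congr 1
      rw [eq_iff_iff, ← hidx y']
      exact ⟨fun h => e.lt_iff_lt.mp (Subtype.coe_lt_coe.mp h),
        fun h => Subtype.coe_lt_coe.mpr (e.lt_iff_lt.mpr h)⟩
    rw [h1, h2, hF]
  have hconv : ∑ v ∈ s, (min (Hv Q g v) w - min (Av Q g v) w)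
      = ∑ i : Fin k, (min (Hv Q g (e i)) w - min (Av Q g (e i)) w) := by
    rw [← Finset.sum_coe_sort s (fun v => min (Hv Q g v) w - min (Av Q g v) w)]
    exact (Fintype.sum_equiv e.toEquiv _ _ (fun i => rfl)).symm
  rw [hconv, Finset.sum_congr rfl (fun i _ => hstep i),
    Fin.sum_univ_eq_sum_range (fun j => F (j + 1) - F j) k,
    Finset.sum_range_sub F, hFk, hF0, sub_zero]

lemma sum_alpha [Nonempty Y] (Q : Y → ℝ) (hQ0 : ∀ y, 0 ≤ Q y)
    (hQ1 : ∑ y : Y, Q y = 1) (g : Y → ℝ) (w : ℝ) (hw : 0 < w) (hw1 : w ≤ 1) :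
    ∑ y : Y, Q y * av Q g w (g y) = w := by
  classical
  have hmem : ∀ y : Y, g y ∈ Finset.image g Finset.univ :=
    fun y => Finset.mem_image_of_mem g (Finset.mem_univ y)
  have hgroup : ∑ y : Y, Q y * av Q g w (g y)
      = ∑ v ∈ Finset.image g Finset.univ, Bv Q g v * av Q g w v := by
    rw [← Finset.sum_fiberwise_of_maps_to (fun y _ => hmem y) (fun y => Q y * av Q g w (g y))]
    apply Finset.sum_congr rfl
    intro v hv
    have h1 : ∀ y ∈ Finset.univ.filter (fun y => g y = v),
        Q y * av Q g w (g y) = Q y * av Q g w v := by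
      intro y hy; rw [(Finset.mem_filter.mp hy).2]
    rw [Finset.sum_congr rfl h1, ← Finset.sum_mul]
    congr 1
    rw [Bv, Finset.sum_filter]
  rw [hgroup, Finset.sum_congr rfl (fun v _ => step_eq Q g hQ0 w v),
    telescope Q g hQ1 w hw.le hw1]

lemma exchange {Y : Type*} [Fintype Y] (g : Y → ℝ) (W V C : Y → ℝ)
    (hW0 : ∀ y, 0 ≤ W y) (hWC : ∀ y, W y ≤ C y) (hW1 : ∑ y : Y, W y = 1)
    (hV0 : ∀ y, 0 ≤ V y) (hVC : ∀ y, V y ≤ C y) (hV1 : ∑ y : Y, V y = 1)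
    (hmono : ∀ y1 y2, g y1 < g y2 → V y2 ≠ 0 → V y1 = C y1) :
    ∑ y : Y, V y * g y ≤ ∑ y : Y, W y * g y := by
  classical
  have hex : ∃ y, V y ≠ 0 := by
    by_contra h
    push_neg at h
    rw [Finset.sum_congr rfl (fun y _ => h y)] at hV1
    simp at hV1
  set s := Finset.univ.filter (fun y => V y ≠ 0) with hs
  have hsne : (s.image g).Nonempty := by
    obtain ⟨y, hy⟩ := hex
    exact ⟨g y, Finset.mem_image_of_mem g (Finset.mem_filter.mpr ⟨Finset.mem_univ y, hy⟩)⟩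
  set t := (s.image g).max' hsne with ht
  obtain ⟨y₀, hy₀s, hy₀⟩ := Finset.mem_image.mp ((s.image g).max'_mem hsne)
  have hi : ∀ y, V y ≠ 0 → g y ≤ t :=
    fun y hy => Finset.le_max' _ _ (Finset.mem_image_of_mem g (Finset.mem_filter.mpr ⟨Finset.mem_univ y, hy⟩))
  have hii : ∀ y, g y < t → V y = C y :=
    fun y hy => hmono y y₀ (hy₀ ▸ hy) (Finset.mem_filter.mp hy₀s).2
  have hterm : ∀ y, 0 ≤ (W y - V y) * (g y - t) := by
    intro y
    rcases lt_trichotomy (g y) t with h | h | h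
    · have h2 := hii y h
      nlinarith [hWC y]
    · simp [h]
    · have hV : V y = 0 := by
        by_contra hne
        exact absurd (hi y hne) (not_le.mpr h)
      rw [hV]
      nlinarith [hW0 y]
  have hexp : ∑ y : Y, (W y - V y) * (g y - t)
      = (∑ y : Y, W y * g y) - (∑ y : Y, V y * g y)
        - (t * (∑ y : Y, W y) - t * (∑ y : Y, V y)) := by
    rw [Finset.mul_sum, Finset.mul_sum, ← Finset.sum_sub_distrib, ← Finset.sum_sub_distrib,
      ← Finset.sum_sub_distrib]
    apply Finset.sum_congr rfl
    intro y _
    ring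
  have h0 : 0 ≤ ∑ y : Y, (W y - V y) * (g y - t) := Finset.sum_nonneg fun y _ => hterm y
  rw [hexp, hW1, hV1] at h0
  linarith

lemma av_nonneg (Q g : Y → ℝ) (w v : ℝ) : 0 ≤ av Q g w v := by
  rw [av]; exact ind_nonneg _ _ _

lemma av_le_one (Q g : Y → ℝ) (w v : ℝ) : av Q g w v ≤ 1 := by
  rw [av]; exact ind_le_one _ _ _

lemma av_mono_one (Q g : Y → ℝ) (hQ0 : ∀ y, 0 ≤ Q y) {w v1 v2 : ℝ} (h : v1 < v2)
    (h2 : av Q g w v2 ≠ 0) : av Q g w v1 = 1 := by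
  have hA2 : Av Q g v2 ≤ w := by
    by_contra hc
    push_neg at hc
    exact h2 (by rw [av]; exact ind_eq_zero _ _ _ (Bv_nonneg Q g hQ0 v2) hc)
  have hle : Av Q g v1 + Bv Q g v1 ≤ Av Q g v2 := by
    rw [← Hv_eq, Hv, Av]
    apply Finset.sum_le_sum
    intro y' _
    split_ifs <;> linarith [hQ0 y']
  rw [av]; exact ind_eq_one _ _ _ (Bv_nonneg Q g hQ0 v1) (le_trans hle hA2)

end Aux

/-- Variational form: `D̃(e^{−R},Q) = inf { E_{P×W}[d] : W channel with`
`P(x) W(y|x) ≤ e^R P(x) Q(y) for all x,y }`, i.e. `D_∞(P × W ‖ P × Q) ≤ R`. -/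
theorem variational_inf {X Y : Type*} [Fintype X] [Fintype Y] [Nonempty X] [Nonempty Y]
    (P : X → ℝ) (hP0 : ∀ x, 0 ≤ P x) (hP1 : ∑ x : X, P x = 1)
    (Q : Y → ℝ) (hQ0 : ∀ y, 0 ≤ Q y) (hQ1 : ∑ y : Y, Q y = 1)
    (d : X → Y → ℝ) (hd : ∀ x y, 0 ≤ d x y)
    (R : ℝ) (hR : 0 ≤ R) :
    Dtilde P Q d (Real.exp (-R)) = sInf {v : ℝ | ∃ W : X → Y → ℝ,
      (∀ x y, 0 ≤ W x y) ∧ (∀ x, ∑ y : Y, W x y = 1) ∧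
      (∀ x y, P x * W x y ≤ Real.exp R * (P x * Q y)) ∧
      v = ∑ x : X, ∑ y : Y, P x * W x y * d x y} := by
  classical
  set w := Real.exp (-R) with hwdef
  have hw : 0 < w := Real.exp_pos _
  have hw1 : w ≤ 1 := by
    have h := Real.exp_le_exp.mpr (neg_nonpos.mpr hR)
    rw [Real.exp_zero] at h
    rw [hwdef]
    exact h
  have hwinv : w⁻¹ = Real.exp R := by rw [hwdef, ← Real.exp_neg, neg_neg]
  have hwinv0 : 0 ≤ w⁻¹ := inv_nonneg.mpr hw.le
  set S := {v : ℝ | ∃ W : X → Y → ℝ,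
      (∀ x y, 0 ≤ W x y) ∧ (∀ x, ∑ y : Y, W x y = 1) ∧
      (∀ x y, P x * W x y ≤ Real.exp R * (P x * Q y)) ∧
      v = ∑ x : X, ∑ y : Y, P x * W x y * d x y} with hS
  have hDt : Dtilde P Q d w = ∑ x : X, ∑ y : Y,
      P x * (w⁻¹ * (Q y * av Q (d x) w (d x y))) * d x y := by
    rw [Dtilde, Finset.mul_sum]
    apply Finset.sum_congr rfl
    intro x _
    rw [Finset.mul_sum]
    apply Finset.sum_congr rfl
    intro y _
    have h1 : (∫ u in Set.Icc (0:ℝ) 1, if pc Q d x y u ≤ w then (1:ℝ) else 0)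
        = av Q (d x) w (d x y) := rfl
    rw [h1]; ring
  set Wopt : X → Y → ℝ := fun x y => w⁻¹ * (Q y * av Q (d x) w (d x y)) with hWopt
  have hWopt0 : ∀ x y, 0 ≤ Wopt x y := fun x y =>
    mul_nonneg hwinv0 (mul_nonneg (hQ0 y) (av_nonneg _ _ _ _))
  have hWoptC : ∀ x y, Wopt x y ≤ w⁻¹ * Q y := fun x y =>
    mul_le_mul_of_nonneg_left (mul_le_of_le_one_right (hQ0 y) (av_le_one _ _ _ _)) hwinv0
  have hWoptsum : ∀ x, ∑ y : Y, Wopt x y = 1 := by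
    intro x
    rw [hWopt]
    dsimp only
    rw [← Finset.mul_sum, sum_alpha Q hQ0 hQ1 (d x) w hw hw1, inv_mul_cancel₀ hw.ne']
  have hWoptcons : ∀ x y, P x * Wopt x y ≤ Real.exp R * (P x * Q y) := by
    intro x y
    rw [← hwinv]
    calc P x * Wopt x y ≤ P x * (w⁻¹ * Q y) :=
          mul_le_mul_of_nonneg_left (hWoptC x y) (hP0 x)
      _ = w⁻¹ * (P x * Q y) := by ring
  have hmemD : Dtilde P Q d w ∈ S := ⟨Wopt, hWopt0, hWoptsum, hWoptcons, hDt⟩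
  have hlb : ∀ v ∈ S, Dtilde P Q d w ≤ v := by
    rintro v ⟨W, hW0, hW1, hWc, rfl⟩
    rw [hDt]
    apply Finset.sum_le_sum
    intro x _
    rcases eq_or_lt_of_le (hP0 x) with hPx | hPx
    · simp [← hPx]
    · have hWle : ∀ y, W x y ≤ w⁻¹ * Q y := by
        intro y
        have h1 := hWc x y
        rw [← hwinv] at h1
        have h2 : P x * W x y ≤ P x * (w⁻¹ * Q y) := by linarith [h1]
        exact (mul_le_mul_iff_right₀ hPx).mp h2
      have key : ∑ y : Y, (w⁻¹ * (Q y * av Q (d x) w (d x y))) * d x y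
          ≤ ∑ y : Y, W x y * d x y := by
        apply exchange (d x) (W x) _ (fun y => w⁻¹ * Q y) (hW0 x) hWle (hW1 x)
          (fun y => hWopt0 x y) (fun y => hWoptC x y) (hWoptsum x)
        intro y1 y2 hlt hne
        have hαne : av Q (d x) w (d x y2) ≠ 0 := by
          intro h
          apply hne
          simp [hWopt, h]
        rw [hWopt]
        dsimp only
        rw [av_mono_one Q (d x) hQ0 hlt hαne]
        ring
      calc ∑ y : Y, P x * (w⁻¹ * (Q y * av Q (d x) w (d x y))) * d x y
          = P x * ∑ y : Y, (w⁻¹ * (Q y * av Q (d x) w (d x y))) * d x y := by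
            rw [Finset.mul_sum]
            exact Finset.sum_congr rfl fun y _ => (mul_assoc _ _ _)
        _ ≤ P x * ∑ y : Y, W x y * d x y :=
            mul_le_mul_of_nonneg_left key (hP0 x)
        _ = ∑ y : Y, P x * W x y * d x y := by
            rw [Finset.mul_sum]
            exact Finset.sum_congr rfl fun y _ => (mul_assoc _ _ _).symm
  exact le_antisymm (le_csInf ⟨_, hmemD⟩ hlb) (csInf_le ⟨_, hlb⟩ hmemD)
end

section
/- For every probability mass function Q on 𝒴, the map w ↦ D̃(w,Q) is nondecreasing on (0,1]: if 0 < w₁ ≤ w₂ ≤ 1 then D̃(w₁,Q) ≤ D̃(w₂,Q). -/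
open MeasureTheory

/-! ### Auxiliary machinery -/

section Aux

variable {Y : Type*} [Fintype Y]

/-- `Q{y : v y ≤ t}`. -/
noncomputable def Fle (Q : Y → ℝ) (v : Y → ℝ) (t : ℝ) : ℝ := ∑ y, if v y ≤ t then Q y else 0
/-- `Q{y : v y < t}`. -/
noncomputable def Flt (Q : Y → ℝ) (v : Y → ℝ) (t : ℝ) : ℝ := ∑ y, if v y < t then Q y else 0

lemma integral_step (c : ℝ) :
    (∫ u in Set.Icc (0:ℝ) 1, if u ≤ c then (1:ℝ) else 0) = max 0 (min 1 c) := by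
  have h : (fun u : ℝ => if u ≤ c then (1:ℝ) else 0)
      = (Set.Iic c).indicator (fun _ => (1:ℝ)) := by
    funext u; simp [Set.indicator_apply, Set.mem_Iic]
  rw [h, setIntegral_indicator measurableSet_Iic]
  rw [show Set.Icc (0:ℝ) 1 ∩ Set.Iic c = Set.Icc 0 (min 1 c) by
    rw [← Set.Ici_inter_Iic, Set.inter_assoc, Set.Iic_inter_Iic, Set.Ici_inter_Iic]]
  rw [setIntegral_const, measureReal_def, Real.volume_Icc, smul_eq_mul, mul_one]
  rcases le_total 0 (min 1 c) with h'|h'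
  · rw [ENNReal.toReal_ofReal (by linarith), max_eq_right h']; ring
  · rw [ENNReal.ofReal_eq_zero.mpr (by linarith), ENNReal.toReal_zero, max_eq_left h']

lemma clamp_eq (A M w : ℝ) (hM : 0 < M) :
    M * max 0 (min 1 ((w - A) / M)) = min w (A + M) - min w A := by
  rcases le_total w A with h|h
  · rw [min_eq_left (by linarith : w ≤ A + M), min_eq_left h,
      min_eq_right (by exact (div_nonpos_iff.mpr (Or.inr ⟨by linarith, hM.le⟩)).trans zero_le_one),
      max_eq_left (div_nonpos_iff.mpr (Or.inr ⟨by linarith, hM.le⟩))]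
    ring
  · rcases le_total w (A + M) with h2|h2
    · rw [min_eq_left h2, min_eq_right h,
        min_eq_right ((div_le_one hM).mpr (by linarith)),
        max_eq_right (div_nonneg (by linarith) hM.le)]
      field_simp
    · rw [min_eq_right h2, min_eq_right h,
        min_eq_left ((one_le_div hM).mpr (by linarith)), max_eq_right zero_le_one]
      ring

lemma min_sub_min_mono {L R w₁ w₂ : ℝ} (hLR : L ≤ R) (hw : w₁ ≤ w₂) :
    min w₁ R - min w₁ L ≤ min w₂ R - min w₂ L := by
  simp only [min_def]; split_ifs <;> linarith

lemma telescope_s16 (m : ℝ → ℝ) (w : ℝ) (S : Finset ℝ) :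
    ∑ t ∈ S, (min w (∑ t' ∈ S.filter (· ≤ t), m t') - min w (∑ t' ∈ S.filter (· < t), m t'))
      = min w (∑ t ∈ S, m t) - min w 0 := by
  classical
  induction S using Finset.induction_on_max with
  | empty => simp
  | insert a s ha ih =>
    have hans : a ∉ s := fun h => lt_irrefl a (ha a h)
    rw [Finset.sum_insert hans]
    have h1 : (insert a s).filter (· ≤ a) = insert a s := by
      apply Finset.filter_true_of_mem
      intro x hx
      rcases Finset.mem_insert.mp hx with rfl | hx
      · exact le_refl _
      · exact (ha x hx).le
    have h2 : (insert a s).filter (· < a) = s := by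
      rw [Finset.filter_insert, if_neg (lt_irrefl a), Finset.filter_true_of_mem
        (fun x hx => ha x hx)]
    have h3 : ∀ t ∈ s,
        (min w (∑ t' ∈ (insert a s).filter (· ≤ t), m t')
          - min w (∑ t' ∈ (insert a s).filter (· < t), m t'))
        = (min w (∑ t' ∈ s.filter (· ≤ t), m t') - min w (∑ t' ∈ s.filter (· < t), m t')) := by
      intro t ht
      rw [Finset.filter_insert, if_neg (not_le.mpr (ha t ht)),
        Finset.filter_insert, if_neg (not_lt.mpr (ha t ht).le)]
    rw [Finset.sum_congr rfl h3, ih, h1, h2, Finset.sum_insert hans]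
    ring

lemma Flt_le_Fle (Q : Y → ℝ) (hQ0 : ∀ y, 0 ≤ Q y) (v : Y → ℝ) (t : ℝ) :
    Flt Q v t ≤ Fle Q v t := by
  apply Finset.sum_le_sum
  intro y _
  split_ifs with h1 h2
  · rfl
  · exact absurd h1.le h2
  · exact hQ0 y
  · rfl

lemma Fle_le_Flt (Q : Y → ℝ) (hQ0 : ∀ y, 0 ≤ Q y) (v : Y → ℝ) {t t' : ℝ} (h : t < t') :
    Fle Q v t ≤ Flt Q v t' := by
  apply Finset.sum_le_sum
  intro y _
  split_ifs with h1 h2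
  · rfl
  · exact absurd (lt_of_le_of_lt h1 h) h2
  · exact hQ0 y
  · rfl

lemma Fle_sub_Flt (Q : Y → ℝ) (v : Y → ℝ) (t : ℝ) :
    Fle Q v t - Flt Q v t = ∑ y, if v y = t then Q y else 0 := by
  rw [Fle, Flt, ← Finset.sum_sub_distrib]
  apply Finset.sum_congr rfl
  intro y _
  rcases lt_trichotomy (v y) t with h|h|h
  · rw [if_pos h.le, if_pos h, if_neg h.ne]; ring
  · rw [if_pos h.le, if_neg (by simp [h]), if_pos h]; ring
  · rw [if_neg (not_le.mpr h), if_neg (asymm h), if_neg h.ne']; ring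

lemma filter_sum_le (Q : Y → ℝ) (v : Y → ℝ) (t : ℝ) :
    ∑ t' ∈ (Finset.image v Finset.univ).filter (· ≤ t), (∑ y, if v y = t' then Q y else 0)
      = Fle Q v t := by
  classical
  rw [Finset.sum_comm]
  apply Finset.sum_congr rfl
  intro y _
  rw [Finset.sum_congr rfl (fun t' _ => by rw [show (if v y = t' then Q y else 0)
      = (if t' = v y then Q y else 0) by simp [eq_comm]]),
    Finset.sum_ite_eq' ((Finset.image v Finset.univ).filter (· ≤ t)) (v y) (fun _ => Q y)]
  simp [Finset.mem_filter, Finset.mem_image_of_mem v (Finset.mem_univ y)]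

lemma filter_sum_lt (Q : Y → ℝ) (v : Y → ℝ) (t : ℝ) :
    ∑ t' ∈ (Finset.image v Finset.univ).filter (· < t), (∑ y, if v y = t' then Q y else 0)
      = Flt Q v t := by
  classical
  rw [Finset.sum_comm]
  apply Finset.sum_congr rfl
  intro y _
  rw [Finset.sum_congr rfl (fun t' _ => by rw [show (if v y = t' then Q y else 0)
      = (if t' = v y then Q y else 0) by simp [eq_comm]]),
    Finset.sum_ite_eq' ((Finset.image v Finset.univ).filter (· < t)) (v y) (fun _ => Q y)]
  simp [Finset.mem_filter, Finset.mem_image_of_mem v (Finset.mem_univ y)]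

lemma image_sum_total (Q : Y → ℝ) (v : Y → ℝ) :
    ∑ t' ∈ Finset.image v Finset.univ, (∑ y, if v y = t' then Q y else 0) = ∑ y, Q y := by
  classical
  rw [Finset.sum_comm]
  apply Finset.sum_congr rfl
  intro y _
  rw [Finset.sum_congr rfl (fun t' _ => by rw [show (if v y = t' then Q y else 0)
      = (if t' = v y then Q y else 0) by simp [eq_comm]]),
    Finset.sum_ite_eq' (Finset.image v Finset.univ) (v y) (fun _ => Q y)]
  simp [Finset.mem_image_of_mem v (Finset.mem_univ y)]

lemma exists_vstar (Q : Y → ℝ) (hQ0 : ∀ y, 0 ≤ Q y) (hQ1 : ∑ y, Q y = 1)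
    (v : Y → ℝ) [Nonempty Y] {w : ℝ} (hw : 0 < w) (hw1 : w ≤ 1) :
    ∃ c ∈ Finset.image v Finset.univ, Flt Q v c < w ∧ w ≤ Fle Q v c := by
  classical
  have hSne : (Finset.image v Finset.univ).Nonempty :=
    ⟨v (Classical.arbitrary Y), Finset.mem_image_of_mem v (Finset.mem_univ _)⟩
  set S := Finset.image v Finset.univ with hS
  set T := S.filter (fun t => w ≤ Fle Q v t) with hT
  have hTne : T.Nonempty := by
    refine ⟨S.max' hSne, Finset.mem_filter.mpr ⟨S.max'_mem hSne, ?_⟩⟩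
    have : Fle Q v (S.max' hSne) = ∑ y, Q y := by
      apply Finset.sum_congr rfl
      intro y _
      rw [if_pos (S.le_max' (v y) (Finset.mem_image_of_mem v (Finset.mem_univ y)))]
    rw [this, hQ1]; exact hw1
  refine ⟨T.min' hTne, (Finset.mem_filter.mp (T.min'_mem hTne)).1, ?_,
    (Finset.mem_filter.mp (T.min'_mem hTne)).2⟩
  by_contra hcon
  push_neg at hcon
  set c := T.min' hTne
  have hpos : 0 < Flt Q v c := lt_of_lt_of_le hw hcon
  obtain ⟨y₀, -, hy₀⟩ := Finset.exists_ne_zero_of_sum_ne_zero (ne_of_gt hpos)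
  have hy₀lt : v y₀ < c := by by_contra h; rw [if_neg h] at hy₀; exact hy₀ rfl
  have hUne : (S.filter (· < c)).Nonempty :=
    ⟨v y₀, Finset.mem_filter.mpr ⟨Finset.mem_image_of_mem v (Finset.mem_univ y₀), hy₀lt⟩⟩
  set t'' := (S.filter (· < c)).max' hUne with ht''
  have ht''lt : t'' < c := (Finset.mem_filter.mp ((S.filter (· < c)).max'_mem hUne)).2
  have hFle : Flt Q v c ≤ Fle Q v t'' := by
    apply Finset.sum_le_sum
    intro y _
    split_ifs with h1 h2
    · rfl
    · exact absurd ((S.filter (· < c)).le_max' (v y) (Finset.mem_filter.mpr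
        ⟨Finset.mem_image_of_mem v (Finset.mem_univ y), h1⟩)) h2
    · exact hQ0 y
    · rfl
  have ht''T : t'' ∈ T := Finset.mem_filter.mpr
    ⟨(Finset.mem_filter.mp ((S.filter (· < c)).max'_mem hUne)).1, le_trans hcon hFle⟩
  exact absurd (T.min'_le t'' ht''T) (not_le.mpr ht''lt)

lemma per_x (Q : Y → ℝ) (hQ0 : ∀ y, 0 ≤ Q y) (hQ1 : ∑ y, Q y = 1)
    (v : Y → ℝ) [Nonempty Y]
    {w₁ w₂ : ℝ} (hw₁ : 0 < w₁) (h12 : w₁ ≤ w₂) (hw₂ : w₂ ≤ 1) :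
    w₂ * (∑ t ∈ Finset.image v Finset.univ,
            t * (min w₁ (Fle Q v t) - min w₁ (Flt Q v t)))
      ≤ w₁ * (∑ t ∈ Finset.image v Finset.univ,
            t * (min w₂ (Fle Q v t) - min w₂ (Flt Q v t))) := by
  classical
  set S := Finset.image v Finset.univ with hS
  have Phi : ∀ w : ℝ, 0 ≤ w → w ≤ 1 →
      ∑ t ∈ S, (min w (Fle Q v t) - min w (Flt Q v t)) = w := by
    intro w hw0 hw1
    have := telescope_s16 (fun t' => ∑ y, if v y = t' then Q y else 0) w S
    rw [image_sum_total, hQ1] at this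
    rw [Finset.sum_congr rfl (fun t _ => by
      rw [← filter_sum_le Q v t, ← filter_sum_lt Q v t]), this,
      min_eq_left hw1, min_eq_right hw0]
    ring
  obtain ⟨c, hcS, hc1, hc2⟩ := exists_vstar Q hQ0 hQ1 v hw₁ (le_trans h12 hw₂)
  set G₁ := ∑ t ∈ S, t * (min w₁ (Fle Q v t) - min w₁ (Flt Q v t)) with hG₁
  set G₂ := ∑ t ∈ S, t * (min w₂ (Fle Q v t) - min w₂ (Flt Q v t)) with hG₂
  have C1 : G₁ ≤ c * w₁ := by
    have : G₁ ≤ ∑ t ∈ S, c * (min w₁ (Fle Q v t) - min w₁ (Flt Q v t)) := by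
      apply Finset.sum_le_sum
      intro t _
      rcases le_or_gt t c with h|h
      · apply mul_le_mul_of_nonneg_right h
        have := Flt_le_Fle Q hQ0 v t
        have h1 : min w₁ (Flt Q v t) ≤ min w₁ (Fle Q v t) := min_le_min le_rfl this
        linarith
      · have hF : w₁ ≤ Flt Q v t := le_trans hc2 (Fle_le_Flt Q hQ0 v h)
        have hF2 : w₁ ≤ Fle Q v t := le_trans hF (Flt_le_Fle Q hQ0 v t)
        rw [min_eq_left hF, min_eq_left hF2, sub_self, mul_zero, mul_zero]
    rw [← Finset.mul_sum, Phi w₁ hw₁.le (le_trans h12 hw₂)] at this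
    exact this
  have C2 : c * (w₂ - w₁) ≤ G₂ - G₁ := by
    have key : ∑ t ∈ S, c * ((min w₂ (Fle Q v t) - min w₂ (Flt Q v t))
        - (min w₁ (Fle Q v t) - min w₁ (Flt Q v t)))
        ≤ ∑ t ∈ S, t * ((min w₂ (Fle Q v t) - min w₂ (Flt Q v t))
        - (min w₁ (Fle Q v t) - min w₁ (Flt Q v t))) := by
      apply Finset.sum_le_sum
      intro t _
      rcases le_or_gt c t with h|h
      · apply mul_le_mul_of_nonneg_right h
        have := min_sub_min_mono (Flt_le_Fle Q hQ0 v t) h12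
        linarith
      · have hF : Fle Q v t < w₁ := lt_of_le_of_lt (Fle_le_Flt Q hQ0 v h) hc1
        have hF' : Flt Q v t < w₁ := lt_of_le_of_lt (Flt_le_Fle Q hQ0 v t) hF
        rw [min_eq_right hF.le, min_eq_right hF'.le,
          min_eq_right (le_trans hF.le h12), min_eq_right (le_trans hF'.le h12),
          sub_self, mul_zero, mul_zero]
    have e1 : ∑ t ∈ S, c * ((min w₂ (Fle Q v t) - min w₂ (Flt Q v t))
        - (min w₁ (Fle Q v t) - min w₁ (Flt Q v t))) = c * (w₂ - w₁) := by
      rw [← Finset.mul_sum, Finset.sum_sub_distrib,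
        Phi w₂ (le_trans hw₁.le h12) hw₂, Phi w₁ hw₁.le (le_trans h12 hw₂)]
    have e2 : ∑ t ∈ S, t * ((min w₂ (Fle Q v t) - min w₂ (Flt Q v t))
        - (min w₁ (Fle Q v t) - min w₁ (Flt Q v t))) = G₂ - G₁ := by
      rw [hG₁, hG₂, ← Finset.sum_sub_distrib]
      apply Finset.sum_congr rfl
      intro t _
      ring
    rw [e1, e2] at key
    exact key
  nlinarith [mul_le_mul_of_nonneg_left C2 hw₁.le,
    mul_le_mul_of_nonneg_right C1 (by linarith : (0:ℝ) ≤ w₂ - w₁)]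

/-- Closed form of the `y`-summed integral as a sum over the image of `v = d x`. -/
lemma sum_y_eq {X : Type*} (Q : Y → ℝ) (hQ0 : ∀ y, 0 ≤ Q y) (d : X → Y → ℝ) (x : X) (w : ℝ) :
    ∑ y, Q y * d x y * (∫ u in Set.Icc (0:ℝ) 1, if pc Q d x y u ≤ w then (1:ℝ) else 0)
      = ∑ t ∈ Finset.image (d x) Finset.univ,
          t * (min w (Fle Q (d x) t) - min w (Flt Q (d x) t)) := by
  classical
  have key_y : ∀ y : Y,
      Q y * d x y * (∫ u in Set.Icc (0:ℝ) 1, if pc Q d x y u ≤ w then (1:ℝ) else 0)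
        = Q y * ((d x y * (min w (Fle Q (d x) (d x y)) - min w (Flt Q (d x) (d x y))))
            / (∑ y', if d x y' = d x y then Q y' else 0)) := by
    intro y
    set A := Flt Q (d x) (d x y) with hA
    set M := ∑ y', if d x y' = d x y then Q y' else 0 with hM
    have hMA : Fle Q (d x) (d x y) = A + M := by
      have := Fle_sub_Flt Q (d x) (d x y)
      rw [← hM] at this
      linarith
    have hM0 : 0 ≤ M := Finset.sum_nonneg (fun y' _ => by
      split_ifs; exacts [hQ0 y', le_refl 0])
    have hQyM : Q y ≤ M := by
      have := Finset.single_le_sum (f := fun y' => if d x y' = d x y then Q y' else 0)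
        (fun y' _ => by split_ifs; exacts [hQ0 y', le_refl 0]) (Finset.mem_univ y)
      simpa using this
    have hpc : ∀ u : ℝ, pc Q d x y u = A + u * M := fun u => rfl
    rcases eq_or_lt_of_le hM0 with hMeq|hMpos
    · have hQy : Q y = 0 := le_antisymm (hQyM.trans hMeq.symm.le) (hQ0 y)
      rw [hQy]; ring
    · have hcond : ∀ u : ℝ, (pc Q d x y u ≤ w) ↔ (u ≤ (w - A) / M) := by
        intro u
        rw [hpc u, le_div_iff₀ hMpos]
        constructor <;> intro h <;> linarith
      rw [show (∫ u in Set.Icc (0:ℝ) 1, if pc Q d x y u ≤ w then (1:ℝ) else 0)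
          = ∫ u in Set.Icc (0:ℝ) 1, if u ≤ (w - A) / M then (1:ℝ) else 0 by
        apply integral_congr_ae; filter_upwards with u; simp only [hcond u]]
      rw [integral_step, hMA]
      have hclamp := clamp_eq A M w hMpos
      rw [← hclamp]
      field_simp
  rw [Finset.sum_congr rfl (fun y _ => key_y y),
    ← Finset.sum_fiberwise_of_maps_to (fun y _ => Finset.mem_image_of_mem (d x)
      (Finset.mem_univ y)) (fun y => Q y * ((d x y * (min w (Fle Q (d x) (d x y))
        - min w (Flt Q (d x) (d x y)))) / (∑ y', if d x y' = d x y then Q y' else 0)))]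
  apply Finset.sum_congr rfl
  intro t htS
  have hfiber : ∀ y ∈ Finset.univ.filter (fun y => d x y = t),
      Q y * ((d x y * (min w (Fle Q (d x) (d x y)) - min w (Flt Q (d x) (d x y))))
          / (∑ y', if d x y' = d x y then Q y' else 0))
        = Q y * ((t * (min w (Fle Q (d x) t) - min w (Flt Q (d x) t)))
          / (∑ y', if d x y' = t then Q y' else 0)) := by
    intro y hy
    rw [(Finset.mem_filter.mp hy).2]
  rw [Finset.sum_congr rfl hfiber, ← Finset.sum_mul]
  have hsum : ∑ y ∈ Finset.univ.filter (fun y => d x y = t), Q y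
      = ∑ y', if d x y' = t then Q y' else 0 := by
    rw [Finset.sum_filter]
  rw [hsum]
  set M := ∑ y', if d x y' = t then Q y' else 0 with hM
  rcases eq_or_ne M 0 with hMeq|hMne
  · have hbr : Fle Q (d x) t = Flt Q (d x) t := by
      have := Fle_sub_Flt Q (d x) t
      rw [← hM, hMeq] at this
      linarith
    rw [hMeq, hbr]
    simp
  · field_simp

end Aux

/-- The map `w ↦ D̃(w,Q)` is nondecreasing on `(0,1]`. -/
theorem Dtilde_mono {X Y : Type*} [Fintype X] [Fintype Y] [Nonempty X] [Nonempty Y]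
    (P : X → ℝ) (hP0 : ∀ x, 0 ≤ P x) (hP1 : ∑ x : X, P x = 1)
    (Q : Y → ℝ) (hQ0 : ∀ y, 0 ≤ Q y) (hQ1 : ∑ y : Y, Q y = 1)
    (d : X → Y → ℝ) (hd : ∀ x y, 0 ≤ d x y)
    (w₁ w₂ : ℝ) (hw₁ : 0 < w₁) (hw₁₂ : w₁ ≤ w₂) (hw₂ : w₂ ≤ 1) :
    Dtilde P Q d w₁ ≤ Dtilde P Q d w₂ := by
  classical
  have hw₂pos : 0 < w₂ := lt_of_lt_of_le hw₁ hw₁₂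
  have key : ∀ w : ℝ, Dtilde P Q d w = w⁻¹ * ∑ x : X, P x *
      (∑ t ∈ Finset.image (d x) Finset.univ,
        t * (min w (Fle Q (d x) t) - min w (Flt Q (d x) t))) := by
    intro w
    rw [Dtilde]
    congr 1
    apply Finset.sum_congr rfl
    intro x _
    rw [← sum_y_eq Q hQ0 d x w, Finset.mul_sum]
    apply Finset.sum_congr rfl
    intro y _
    ring
  rw [key w₁, key w₂, Finset.mul_sum, Finset.mul_sum]
  apply Finset.sum_le_sum
  intro x _
  have hx := per_x Q hQ0 hQ1 (d x) hw₁ hw₁₂ hw₂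
  set G₁ := ∑ t ∈ Finset.image (d x) Finset.univ,
    t * (min w₁ (Fle Q (d x) t) - min w₁ (Flt Q (d x) t)) with hG₁
  set G₂ := ∑ t ∈ Finset.image (d x) Finset.univ,
    t * (min w₂ (Fle Q (d x) t) - min w₂ (Flt Q (d x) t)) with hG₂
  have h' : G₁ / w₁ ≤ G₂ / w₂ := by
    rw [div_le_div_iff₀ hw₁ hw₂pos]
    linarith [hx]
  have h'' := mul_le_mul_of_nonneg_left h' (hP0 x)
  rw [show w₁⁻¹ * (P x * G₁) = P x * (G₁ / w₁) by ring,
    show w₂⁻¹ * (P x * G₂) = P x * (G₂ / w₂) by ring]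
  exact h''
end
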